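/- Let ρ be a Borel probability measure on ℝ, α > 0, and E_ρ the position observable on L²(ℝ). Then E_ρ is α-regular if and only if ess sup_{x∈ℝ} ρ([x − α/2, x + α/2]) > 1/2, where the essential supremum is taken with respect to Lebesgue measure. -/

import Mathlib

open MeasureTheory Complex
open scoped ENNReal Topology

noncomputable section

/-- `L²(ℝ)` with Lebesgue measure. -/
abbrev L2 : Type := Lp ℂ 2 (volume : Measure ℝ)

/-- `T` is the operator of multiplication by the bounded function `x ↦ ρ(X − x)`. -/
def IsMulByMeas (ρ : Measure ℝ) (X : Set ℝ) (T : L2 →L[ℂ] L2) : Prop :=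
  ∀ f : L2, (T f : ℝ → ℂ) =ᵐ[volume]
    fun x => ((ρ ((· + x) ⁻¹' X)).toReal : ℂ) * (f : ℝ → ℂ) x

/-- An effect is regular if its spectrum extends both strictly above and strictly
below `1/2`. -/
def IsRegularEffect (A : L2 →L[ℂ] L2) : Prop :=
  (∃ z ∈ spectrum ℂ A, 1 / 2 < z.re) ∧ (∃ z ∈ spectrum ℂ A, z.re < 1 / 2)



-- measurability of y ↦ ρ (Icc (a - y) (b - y))
lemma aux_meas (ρ : Measure ℝ) [SFinite ρ] (a b : ℝ) :
    Measurable fun y : ℝ => ρ (Set.Icc (a - y) (b - y)) := by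
  have hs : MeasurableSet {p : ℝ × ℝ | a - p.1 ≤ p.2 ∧ p.2 ≤ b - p.1} :=
    (measurableSet_le (measurable_const.sub measurable_fst) measurable_snd).inter
      (measurableSet_le measurable_snd (measurable_const.sub measurable_fst))
  have h := measurable_measure_prodMk_left (ν := ρ) hs
  have he : (fun y : ℝ => ρ (Set.Icc (a - y) (b - y)))
      = fun y : ℝ => ρ (Prod.mk y ⁻¹' {p : ℝ × ℝ | a - p.1 ≤ p.2 ∧ p.2 ≤ b - p.1}) := by
    funext y
    have : Set.Icc (a - y) (b - y)
        = Prod.mk y ⁻¹' {p : ℝ × ℝ | a - p.1 ≤ p.2 ∧ p.2 ≤ b - p.1} := by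
      ext t; simp [Set.mem_Icc]
    rw [this]
  rw [he]
  exact h

-- norm bound for Lp elements
lemma aux_norm_le (h : L2) (gf : ℝ → ℂ) (hg : (h : ℝ → ℂ) =ᵐ[volume] gf) (C : ℝ) (hC0 : 0 ≤ C)
    (f : L2) (hb : ∀ᵐ y ∂(volume : Measure ℝ), ‖gf y‖ ≤ C * ‖(f : ℝ → ℂ) y‖) :
    ‖h‖ ≤ C * ‖f‖ := by
  rw [Lp.norm_def, Lp.norm_def]
  have h1 : eLpNorm (h : ℝ → ℂ) 2 volume = eLpNorm gf 2 volume := eLpNorm_congr_ae hg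
  have h2 : eLpNorm gf 2 volume ≤ eLpNorm ((C : ℂ) • (f : ℝ → ℂ)) 2 volume := by
    apply eLpNorm_mono_ae
    refine hb.mono fun y hy => ?_
    simpa [norm_smul, Complex.norm_real, _root_.abs_of_nonneg hC0] using hy
  have h3 : eLpNorm ((C : ℂ) • (f : ℝ → ℂ)) 2 volume
      = (‖(C : ℂ)‖₊ : ℝ≥0∞) * eLpNorm (f : ℝ → ℂ) 2 volume := eLpNorm_const_smul _ _ _ _
  have hfin : (‖(C : ℂ)‖₊ : ℝ≥0∞) * eLpNorm (f : ℝ → ℂ) 2 volume ≠ ∞ :=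
    ENNReal.mul_ne_top ENNReal.coe_ne_top (Lp.eLpNorm_ne_top f)
  have := ENNReal.toReal_mono hfin (h1 ▸ (h2.trans_eq h3))
  refine this.trans ?_
  rw [ENNReal.toReal_mul, ENNReal.coe_toReal, coe_nnnorm, Complex.norm_real,
    Real.norm_eq_abs, _root_.abs_of_nonneg hC0]

lemma aux_mem_spectrum (T : L2 →L[ℂ] L2) (m : ℝ → ℝ)
    (hm : ∀ f : L2, (T f : ℝ → ℂ) =ᵐ[volume] fun y => (m y : ℂ) * (f : ℝ → ℂ) y)
    (lam : ℝ)
    (happ : ∀ ε : ℝ, 0 < ε → ∃ A : Set ℝ, MeasurableSet A ∧ volume A ≠ 0 ∧ volume A ≠ ∞ ∧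
      ∀ᵐ y ∂(volume : Measure ℝ), y ∈ A → |m y - lam| ≤ ε) :
    (lam : ℂ) ∈ spectrum ℂ T := by
  rw [spectrum.mem_iff]
  intro hunit
  obtain ⟨u, hu⟩ := hunit
  set S : L2 →L[ℂ] L2 := ((u⁻¹ : (L2 →L[ℂ] L2)ˣ) : L2 →L[ℂ] L2) with hS
  have hSu : S * (u : L2 →L[ℂ] L2) = 1 := by
    rw [hS]; exact u.inv_mul
  have key : ∀ f : L2, ‖f‖ ≤ ‖S‖ * ‖(algebraMap ℂ (L2 →L[ℂ] L2) (lam : ℂ) - T) f‖ := by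
    intro f
    have : f = S ((algebraMap ℂ (L2 →L[ℂ] L2) (lam : ℂ) - T) f) := by
      rw [← hu]
      change f = (S * (u : L2 →L[ℂ] L2)) f
      rw [hSu]; rfl
    conv_lhs => rw [this]
    exact S.le_opNorm _
  set ε : ℝ := 1 / (2 * (‖S‖ + 1)) with hε_def
  have hSnn : (0:ℝ) ≤ ‖S‖ := norm_nonneg S
  have hε : 0 < ε := by positivity
  obtain ⟨A, hA, hA0, hAfin, hAae⟩ := happ ε hε
  set f : L2 := indicatorConstLp 2 hA hAfin (1 : ℂ) with hf_def
  have hf_coe : (f : ℝ → ℂ) =ᵐ[volume] A.indicator fun _ => (1 : ℂ) := indicatorConstLp_coeFn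
  have hf_pos : 0 < ‖f‖ := by
    rw [hf_def, norm_indicatorConstLp (by norm_num) (by norm_num)]
    have h0 : 0 < (volume A).toReal := ENNReal.toReal_pos hA0 hAfin
    rw [norm_one, one_mul]
    exact Real.rpow_pos_of_pos h0 _
  set w : L2 := (algebraMap ℂ (L2 →L[ℂ] L2) (lam : ℂ) - T) f with hw_def
  have hw_coe : (w : ℝ → ℂ) =ᵐ[volume] fun y => ((lam : ℂ) - (m y : ℂ)) * (f : ℝ → ℂ) y := by
    have h1 : w = (lam : ℂ) • f - T f := by
      rw [hw_def, ContinuousLinearMap.sub_apply]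
      congr 1
    rw [h1]
    filter_upwards [Lp.coeFn_sub ((lam : ℂ) • f) (T f), Lp.coeFn_smul (lam : ℂ) f, hm f]
      with y h2 h3 h4
    simp only [h2, Pi.sub_apply, h3, Pi.smul_apply, h4, smul_eq_mul]
    ring
  have hb : ∀ᵐ y ∂(volume : Measure ℝ),
      ‖((lam : ℂ) - (m y : ℂ)) * (f : ℝ → ℂ) y‖ ≤ ε * ‖(f : ℝ → ℂ) y‖ := by
    filter_upwards [hf_coe, hAae] with y h1 h2
    by_cases hy : y ∈ A
    · have hmy : |m y - lam| ≤ ε := h2 hy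
      rw [norm_mul]
      have : ‖(lam : ℂ) - (m y : ℂ)‖ ≤ ε := by
        rw [← Complex.ofReal_sub, Complex.norm_real, Real.norm_eq_abs, abs_sub_comm]
        exact hmy
      exact mul_le_mul_of_nonneg_right this (norm_nonneg _)
    · rw [h1, Set.indicator_of_notMem hy]
      simp
  have hw_norm : ‖w‖ ≤ ε * ‖f‖ := aux_norm_le w _ hw_coe ε hε.le f hb
  have hkey := key f
  rw [← hw_def] at hkey
  have hlt : ‖S‖ * ε < 1 := by
    rw [hε_def]
    rw [mul_one_div, div_lt_one (by positivity)]
    nlinarith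
  nlinarith [hkey.trans (mul_le_mul_of_nonneg_left hw_norm hSnn)]

lemma aux_ae_const (T : L2 →L[ℂ] L2) (m : ℝ → ℝ)
    (hm : ∀ f : L2, (T f : ℝ → ℂ) =ᵐ[volume] fun y => (m y : ℂ) * (f : ℝ → ℂ) y)
    (c : ℂ) (hT : ∀ f : L2, T f = c • f) :
    ∀ᵐ y ∂(volume : Measure ℝ), (m y : ℂ) = c := by
  have key : ∀ n : ℕ, ∀ᵐ y ∂(volume : Measure ℝ),
      y ∈ Set.Icc (-(n : ℝ)) (n : ℝ) → (m y : ℂ) = c := by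
    intro n
    set f : L2 := indicatorConstLp 2 (measurableSet_Icc (a := -(n:ℝ)) (b := (n:ℝ)))
      measure_Icc_lt_top.ne (1 : ℂ) with hf_def
    have h1 := hm f
    rw [hT f] at h1
    filter_upwards [h1, Lp.coeFn_smul c f,
      (indicatorConstLp_coeFn : (f : ℝ → ℂ) =ᵐ[volume] _)] with y hy1 hy2 hy3 hyA
    rw [hy2] at hy1
    simp only [Pi.smul_apply, smul_eq_mul, hy3, Set.indicator_of_mem hyA] at hy1
    have hf1 : (f : ℝ → ℂ) y = 1 := hy3.trans (Set.indicator_of_mem hyA _)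
    rcases (by simpa using hy1.symm : (m y : ℂ) = c ∨ (f : ℝ → ℂ) y = 0) with h | h
    · exact h
    · exact absurd (hf1.symm.trans h) one_ne_zero
  filter_upwards [ae_all_iff.2 key] with y hy
  obtain ⟨n, hn⟩ := exists_nat_ge |y|
  exact hy n ⟨neg_le_of_abs_le hn, le_of_abs_le hn⟩

instance : Nontrivial L2 := by
  set f : L2 := indicatorConstLp 2 (measurableSet_Icc (a := (0:ℝ)) (b := (1:ℝ)))
    measure_Icc_lt_top.ne (1 : ℂ)
  refine nontrivial_of_ne f 0 fun h => ?_
  have : ‖f‖ = 0 := by rw [h, norm_zero]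
  rw [norm_indicatorConstLp (by norm_num) (by norm_num)] at this
  have h1 : volume.real (Set.Icc (0:ℝ) 1) = 1 := by simp
  rw [h1] at this
  norm_num at this

lemma aux_not_ae_zero (ρ : Measure ℝ) [IsProbabilityMeasure ρ] (α : ℝ) (hα : 0 < α) :
    ¬ (∀ᵐ t ∂(volume : Measure ℝ), ρ (Set.Icc (t - α / 2) (t + α / 2)) = 0) := by
  intro h
  set c : ℝ := α / 4 with hc_def
  have hc : 0 < c := by positivity
  have hex : ∃ k : ℤ, ρ (Set.Icc ((k : ℝ) * c) ((k : ℝ) * c + c)) ≠ 0 := by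
    by_contra hall
    push_neg at hall
    have hcover : (Set.univ : Set ℝ) ⊆ ⋃ k : ℤ, Set.Icc ((k : ℝ) * c) ((k : ℝ) * c + c) := by
      intro t _
      refine Set.mem_iUnion.2 ⟨⌊t / c⌋, ?_, ?_⟩
      · calc (⌊t / c⌋ : ℝ) * c ≤ (t / c) * c :=
              mul_le_mul_of_nonneg_right (Int.floor_le _) hc.le
          _ = t := by field_simp
      · have := Int.lt_floor_add_one (t / c)
        have h2 : t / c * c < ((⌊t / c⌋ : ℝ) + 1) * c := by
          exact mul_lt_mul_of_pos_right this hc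
        rw [div_mul_cancel₀ _ hc.ne'] at h2
        linarith
    have h0 : ρ Set.univ = 0 := by
      refine le_antisymm ?_ (zero_le)
      refine (measure_mono hcover).trans ?_
      rw [measure_iUnion_null fun k => hall k]
    simp [measure_univ] at h0
  obtain ⟨k, hk⟩ := hex
  have hsub : Set.Icc ((k : ℝ) * c) ((k : ℝ) * c + c)
      ⊆ {t : ℝ | ¬ ρ (Set.Icc (t - α / 2) (t + α / 2)) = 0} := by
    intro t ht
    simp only [Set.mem_setOf_eq]
    intro h0
    apply hk
    refine le_antisymm ?_ (zero_le)
    refine le_trans (measure_mono ?_) h0.le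
    have h1 : t - α / 2 ≤ (k : ℝ) * c := by
      have := ht.2
      rw [hc_def] at *
      linarith
    have h2 : (k : ℝ) * c + c ≤ t + α / 2 := by
      have := ht.1
      rw [hc_def] at *
      linarith
    exact Set.Icc_subset_Icc h1 h2
  have h0 : volume {t : ℝ | ¬ ρ (Set.Icc (t - α / 2) (t + α / 2)) = 0} = 0 := h
  have := (measure_mono hsub).trans h0.le
  rw [Real.volume_Icc] at this
  simp only [nonpos_iff_eq_zero, ENNReal.ofReal_eq_zero] at this
  linarith

/-- `E_ρ` is `α`-regular iff `ess sup_x ρ([x − α/2, x + α/2]) > 1/2`. -/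
theorem stmt8 (ρ : Measure ℝ) [IsProbabilityMeasure ρ] (α : ℝ) (hα : 0 < α)
    (E : Set ℝ → (L2 →L[ℂ] L2))
    (hE : ∀ X : Set ℝ, MeasurableSet X → IsMulByMeas ρ X (E X)) :
    (∀ x r : ℝ, α ≤ r →
      E (Set.Icc (x - r / 2) (x + r / 2)) ≠ 0 →
      E (Set.Icc (x - r / 2) (x + r / 2)) ≠ 1 →
      IsRegularEffect (E (Set.Icc (x - r / 2) (x + r / 2)))) ↔
    (1 / 2 : ℝ≥0∞) < essSup (fun x => ρ (Set.Icc (x - α / 2) (x + α / 2))) volume := by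
  have hpre : ∀ (a b y : ℝ), ((· + y) ⁻¹' (Set.Icc a b)) = Set.Icc (a - y) (b - y) := by
    intro a b y
    ext t
    simp only [Set.mem_preimage, Set.mem_Icc]
    constructor <;> intro h <;> exact ⟨by linarith [h.1], by linarith [h.2]⟩
  set g : ℝ → ℝ≥0∞ := fun t => ρ (Set.Icc (t - α / 2) (t + α / 2)) with hg_def
  have hg_meas : Measurable g := by
    have h1 := aux_meas ρ (-(α / 2)) (α / 2)
    have he : g = (fun y : ℝ => ρ (Set.Icc (-(α / 2) - y) (α / 2 - y))) ∘ (fun t : ℝ => -t) := by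
      funext t
      simp only [hg_def, Function.comp_apply]
      rw [show -(α / 2) - (-t) = t - α / 2 by ring, show α / 2 - (-t) = t + α / 2 by ring]
    rw [he]
    exact h1.comp measurable_neg
  have hg_ne_top : ∀ t, g t ≠ ∞ := fun t => (measure_lt_top ρ _).ne
  constructor
  · intro H
    by_contra hcon
    push_neg at hcon
    have hX := hE (Set.Icc (0 - α / 2) (0 + α / 2)) measurableSet_Icc
    set T := E (Set.Icc (0 - α / 2) (0 + α / 2)) with hT_def
    have hgm : ∀ y : ℝ, g (-y) = ρ (Set.Icc (0 - α / 2 - y) (0 + α / 2 - y)) := by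
      intro y
      simp only [hg_def]
      rw [show -y - α / 2 = 0 - α / 2 - y by ring, show -y + α / 2 = 0 + α / 2 - y by ring]
    have hm : ∀ f : L2, (T f : ℝ → ℂ) =ᵐ[volume]
        fun y => (((g (-y)).toReal : ℝ) : ℂ) * (f : ℝ → ℂ) y := by
      intro f
      have heq : (fun y : ℝ =>
          ((ρ ((· + y) ⁻¹' Set.Icc (0 - α / 2) (0 + α / 2))).toReal : ℂ) * (f : ℝ → ℂ) y)
          = fun y => (((g (-y)).toReal : ℝ) : ℂ) * (f : ℝ → ℂ) y := by
        funext y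
        rw [hpre _ _ y, ← hgm y]
      exact heq ▸ hX f
    have hae : ∀ᵐ t ∂(volume : Measure ℝ), g t ≤ 1 / 2 :=
      (ENNReal.ae_le_essSup g).mono fun t ht => ht.trans hcon
    have hmset : MeasurableSet {t : ℝ | g t ≤ 1 / 2} := hg_meas measurableSet_Iic
    have hmp := Measure.measurePreserving_neg (volume : Measure ℝ)
    have hneg : ∀ᵐ y ∂(volume : Measure ℝ), g (-y) ≤ 1 / 2 := by
      rw [← hmp.map_eq] at hae
      exact (MeasureTheory.ae_map_iff measurable_neg.aemeasurable hmset).mp hae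
    have hm_le : ∀ᵐ y ∂(volume : Measure ℝ), |(g (-y)).toReal| ≤ 1 / 2 := by
      filter_upwards [hneg] with y hy
      rw [_root_.abs_of_nonneg ENNReal.toReal_nonneg]
      have h2 := ENNReal.toReal_mono (by norm_num) hy
      simpa using h2
    have hop : ∀ f : L2, ‖T f‖ ≤ 1 / 2 * ‖f‖ := by
      intro f
      refine aux_norm_le (T f) _ (hm f) (1 / 2) (by norm_num) f ?_
      filter_upwards [hm_le] with y hy
      rw [norm_mul, Complex.norm_real, Real.norm_eq_abs]
      exact mul_le_mul_of_nonneg_right hy (norm_nonneg _)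
    have hne0 : T ≠ 0 := by
      intro h0
      have hc := aux_ae_const T _ hm 0 (fun f => by rw [h0]; simp)
      apply aux_not_ae_zero ρ α hα
      have h1 : ∀ᵐ y ∂(volume : Measure ℝ), g (-y) = 0 := by
        filter_upwards [hc] with y hy
        have h3 : (g (-y)).toReal = 0 := by exact_mod_cast hy
        exact ((ENNReal.toReal_eq_zero_iff _).mp h3).resolve_right (hg_ne_top _)
      have hset0 : MeasurableSet {t : ℝ | g t = 0} := hg_meas (measurableSet_singleton 0)
      have h2 : ∀ᵐ t ∂((volume : Measure ℝ).map Neg.neg), g t = 0 :=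
        (MeasureTheory.ae_map_iff measurable_neg.aemeasurable hset0).mpr h1
      rw [hmp.map_eq] at h2
      exact h2
    have hne1 : T ≠ 1 := by
      intro h1
      have hc := aux_ae_const T _ hm 1 (fun f => by rw [h1]; simp)
      obtain ⟨y, hy1, hy2⟩ := (hm_le.and hc).exists
      have h3 : (g (-y)).toReal = 1 := by exact_mod_cast hy2
      rw [h3] at hy1
      norm_num at hy1
    obtain ⟨⟨z, hz, hz2⟩, -⟩ := H 0 α le_rfl hne0 hne1
    have hTnorm : ‖T‖ ≤ 1 / 2 := ContinuousLinearMap.opNorm_le_bound T (by norm_num) hop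
    have hz3 : ‖z‖ ≤ ‖T‖ := spectrum.norm_le_norm_of_mem hz
    have hz4 : z.re ≤ ‖z‖ := Complex.re_le_norm z
    linarith
  · intro hs x r hr _ _
    have hX := hE (Set.Icc (x - r / 2) (x + r / 2)) measurableSet_Icc
    set T := E (Set.Icc (x - r / 2) (x + r / 2)) with hT_def
    set G : ℝ → ℝ≥0∞ := fun y => ρ (Set.Icc (x - r / 2 - y) (x + r / 2 - y)) with hG_def
    have hG_meas : Measurable G := aux_meas ρ (x - r / 2) (x + r / 2)
    have hG_ne_top : ∀ y, G y ≠ ∞ := fun y => (measure_lt_top ρ _).ne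
    have hG_le1 : ∀ y, G y ≤ 1 := fun y => prob_le_one
    have hm : ∀ f : L2, (T f : ℝ → ℂ) =ᵐ[volume]
        fun y => (((G y).toReal : ℝ) : ℂ) * (f : ℝ → ℂ) y := by
      intro f
      have heq : (fun y : ℝ =>
          ((ρ ((· + y) ⁻¹' Set.Icc (x - r / 2) (x + r / 2))).toReal : ℂ) * (f : ℝ → ℂ) y)
          = fun y => (((G y).toReal : ℝ) : ℂ) * (f : ℝ → ℂ) y := by
        funext y
        rw [hpre _ _ y]
      exact heq ▸ hX f
    have hpoint : ∀ y : ℝ, g (x - y) ≤ G y := by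
      intro y
      apply measure_mono
      exact Set.Icc_subset_Icc (by linarith) (by linarith)
    have hcomp : essSup (fun y : ℝ => g (x - y)) volume = essSup g volume := by
      have hmp : MeasurePreserving (fun y : ℝ => x - y) volume volume :=
        Measure.measurePreserving_sub_left volume x
      have h1 := essSup_map_measure_of_measurable (f := fun y : ℝ => x - y)
        (μ := (volume : Measure ℝ)) hg_meas
        ((measurable_const.sub measurable_id).aemeasurable)
      rw [hmp.map_eq] at h1
      exact h1.symm
    have hgt : 1 / 2 < essSup G volume := by
      calc (1 / 2 : ℝ≥0∞) < essSup g volume := hs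
        _ = essSup (fun y : ℝ => g (x - y)) volume := hcomp.symm
        _ ≤ essSup G volume := essSup_mono_ae (Filter.Eventually.of_forall hpoint)
    have hfin : essSup G volume ≤ 1 := essSup_le_of_ae_le 1 (Filter.Eventually.of_forall hG_le1)
    have hne_top : essSup G volume ≠ ∞ := (hfin.trans_lt ENNReal.one_lt_top).ne
    set lam : ℝ := (essSup G volume).toReal with hlam_def
    have hofReal : ENNReal.ofReal lam = essSup G volume := ENNReal.ofReal_toReal hne_top
    have hlam_gt : 1 / 2 < lam := by
      have h1 := ENNReal.toReal_strict_mono hne_top hgt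
      simpa using h1
    have hm_meas : Measurable (fun y : ℝ => (G y).toReal) := hG_meas.ennreal_toReal
    have hm_le_ae : ∀ᵐ y ∂(volume : Measure ℝ), (G y).toReal ≤ lam :=
      (ENNReal.ae_le_essSup G).mono fun y hy => ENNReal.toReal_mono hne_top hy
    have hspec1 : ((lam : ℝ) : ℂ) ∈ spectrum ℂ T := by
      apply aux_mem_spectrum T (fun y => (G y).toReal) hm lam
      intro ε hε
      have hS0 : volume {y : ℝ | lam - ε < (G y).toReal} ≠ 0 := by
        intro hz0
        have hae2 : ∀ᵐ y ∂(volume : Measure ℝ), (G y).toReal ≤ lam - ε := by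
          rw [ae_iff]
          simpa only [not_le] using hz0
        have hle2 : essSup G volume ≤ ENNReal.ofReal (lam - ε) := by
          refine essSup_le_of_ae_le _ ?_
          filter_upwards [hae2] with y hy
          have h5 : G y = ENNReal.ofReal ((G y).toReal) := (ENNReal.ofReal_toReal (hG_ne_top y)).symm
          rw [h5]
          exact ENNReal.ofReal_le_ofReal hy
        have hlt2 : ENNReal.ofReal (lam - ε) < essSup G volume := by
          rw [← hofReal]
          exact (ENNReal.ofReal_lt_ofReal_iff (by linarith)).mpr (by linarith)
        exact absurd hle2 (not_le.mpr hlt2)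
      have hmeasS : MeasurableSet {y : ℝ | lam - ε < (G y).toReal} :=
        measurableSet_lt measurable_const hm_meas
      have hcup : {y : ℝ | lam - ε < (G y).toReal} ⊆
          ⋃ n : ℕ, ({y : ℝ | lam - ε < (G y).toReal} ∩ Set.Icc (-(n : ℝ)) n) := by
        intro y hy
        obtain ⟨n, hn⟩ := exists_nat_ge |y|
        exact Set.mem_iUnion.2 ⟨n, hy, neg_le_of_abs_le hn, le_of_abs_le hn⟩
      have hex : ∃ n : ℕ,
          volume ({y : ℝ | lam - ε < (G y).toReal} ∩ Set.Icc (-(n : ℝ)) n) ≠ 0 := by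
        by_contra hall
        push_neg at hall
        exact hS0 (le_antisymm ((measure_mono hcup).trans (measure_iUnion_null hall).le)
          (zero_le))
      obtain ⟨n, hn⟩ := hex
      refine ⟨{y : ℝ | lam - ε < (G y).toReal} ∩ Set.Icc (-(n : ℝ)) n,
        hmeasS.inter measurableSet_Icc, hn,
        ((measure_mono Set.inter_subset_right).trans_lt measure_Icc_lt_top).ne, ?_⟩
      filter_upwards [hm_le_ae] with y hy hyA
      have h1 : lam - ε < (G y).toReal := hyA.1
      rw [abs_le]
      exact ⟨by linarith, by linarith [hε.le]⟩
    have hspec0 : (0 : ℂ) ∈ spectrum ℂ T := by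
      have h0 := aux_mem_spectrum T (fun y => (G y).toReal) hm 0 ?_
      · simpa using h0
      intro ε hε
      have htend : Filter.Tendsto (fun n : ℕ => ρ (Set.Iic (x + r / 2 - n)))
          Filter.atTop (𝓝 0) := by
        have h1 : Filter.Tendsto (fun n : ℕ => ρ (Set.Iic (x + r / 2 - n))) Filter.atTop
            (𝓝 (ρ (⋂ n : ℕ, Set.Iic (x + r / 2 - (n : ℝ))))) := by
          apply tendsto_measure_iInter_atTop
          · exact fun n => measurableSet_Iic.nullMeasurableSet
          · intro a b hab
            apply Set.Iic_subset_Iic.mpr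
            have h2 : (a : ℝ) ≤ b := by exact_mod_cast hab
            linarith
          · exact ⟨0, (measure_lt_top ρ _).ne⟩
        have h2 : (⋂ n : ℕ, Set.Iic (x + r / 2 - (n : ℝ))) = ∅ := by
          ext t
          simp only [Set.mem_iInter, Set.mem_Iic, Set.mem_empty_iff_false, iff_false,
            not_forall, not_le]
          obtain ⟨n, hn⟩ := exists_nat_gt (x + r / 2 - t)
          exact ⟨n, by linarith⟩
        rw [h2] at h1
        simpa using h1
      obtain ⟨n, hn⟩ := (htend.eventually_lt_const (ENNReal.ofReal_pos.mpr hε)).exists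
      refine ⟨Set.Icc (n : ℝ) (n + 1), measurableSet_Icc, ?_, measure_Icc_lt_top.ne, ?_⟩
      · rw [Real.volume_Icc]
        norm_num
      · apply Filter.Eventually.of_forall
        intro y hy
        have hsub : Set.Icc (x - r / 2 - y) (x + r / 2 - y) ⊆ Set.Iic (x + r / 2 - n) :=
          fun t ht => le_trans ht.2 (by linarith [hy.1])
        have h3 : G y ≤ ρ (Set.Iic (x + r / 2 - n)) := measure_mono hsub
        have h4 : (G y).toReal ≤ ε := by
          have h5 := ENNReal.toReal_mono ENNReal.ofReal_ne_top (h3.trans hn.le)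
          rwa [ENNReal.toReal_ofReal hε.le] at h5
        show |(G y).toReal - 0| ≤ ε
        rw [sub_zero, _root_.abs_of_nonneg ENNReal.toReal_nonneg]
        exact h4
    exact ⟨⟨(lam : ℂ), hspec1, by rw [Complex.ofReal_re]; exact hlam_gt⟩,
      ⟨0, hspec0, by norm_num⟩⟩
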